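/- For all sufficiently large Δ>0, the function φ is well defined on all of ℝ² (i.e. for every y≠0 there is a unique r>0 with y/r∈L) and has the following properties: φ(y)≥0 for all y∈ℝ² with φ(y)>0 for y≠0; φ(r·y)=r·φ(y) for every r>0 and y∈ℝ²; and {y∈ℝ² : φ(y)=1}=L. -/

import Mathlib

noncomputable section

/-- The quadratic form `e(y₂,y₃) = a·y₂² + b·(y₂−y₃)²` defining the ellipse. -/
def eF (a b : ℝ) (y : ℝ × ℝ) : ℝ := a * y.1 ^ 2 + b * (y.1 - y.2) ^ 2

/-- The gradient of `eF`. -/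
def gradE (a b : ℝ) (y : ℝ × ℝ) : ℝ × ℝ :=
  (2 * a * y.1 + 2 * b * (y.1 - y.2), -(2 * b * (y.1 - y.2)))

/-- Euclidean inner product on `ℝ × ℝ`. -/
def dotp (u v : ℝ × ℝ) : ℝ := u.1 * v.1 + u.2 * v.2

/-- Euclidean norm on `ℝ × ℝ`. -/
def enorm2 (v : ℝ × ℝ) : ℝ := Real.sqrt (v.1 ^ 2 + v.2 ^ 2)

/-- `T` is a point of the ellipse in the open quadrant `{y₂<0, y₃<0}` where the
gradient of `e` is a positive multiple of `(−Δ, 1)`. -/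
def IsT3 (a b Δ : ℝ) (T : ℝ × ℝ) : Prop :=
  eF a b T = 1 ∧ T.1 < 0 ∧ T.2 < 0 ∧ ∃ c > 0, gradE a b T = c • ((-Δ, 1) : ℝ × ℝ)

/-- `T` is a point of the ellipse with `y₃ < 0` where the gradient of `e`
is a positive multiple of `(1, −Δ)`. -/
def IsT2 (a b Δ : ℝ) (T : ℝ × ℝ) : Prop :=
  eF a b T = 1 ∧ T.2 < 0 ∧ ∃ c > 0, gradE a b T = c • ((1, -Δ) : ℝ × ℝ)

/-- The configuration of the tangency points `T₂, T₃` and of the intercepts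
`K₂ = (u₂,0)`, `K₃ = (0,u₃)` of the corresponding tangent lines with the axes. -/
def GoodConfig (a b Δ u₂ u₃ : ℝ) (T₂ T₃ : ℝ × ℝ) : Prop :=
  IsT2 a b Δ T₂ ∧ IsT3 a b Δ T₃ ∧ 0 < u₂ ∧ 0 < u₃ ∧
  dotp (gradE a b T₂) (((u₂, 0) : ℝ × ℝ) - T₂) = 0 ∧
  dotp (gradE a b T₃) (((0, u₃) : ℝ × ℝ) - T₃) = 0

/-- The closed arc of the ellipse from `T₂` to `T₃` passing through
`(−a^{−1/2}, −a^{−1/2})`: the points of the ellipse whose outward normal direction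
lies in the closed convex cone spanned by `(1, −Δ)` (normal at `T₂`) and
`(−Δ, 1)` (normal at `T₃`). -/
def arcE (a b Δ : ℝ) : Set (ℝ × ℝ) :=
  {y | eF a b y = 1 ∧ ∃ c₂ c₃ : ℝ, 0 ≤ c₂ ∧ 0 ≤ c₃ ∧
    gradE a b y = c₂ • ((1, -Δ) : ℝ × ℝ) + c₃ • ((-Δ, 1) : ℝ × ℝ)}

/-- The closed contour `L`: segment `K₃K₂`, segment `K₂T₂`, the arc of the ellipse
from `T₂` to `T₃` through `(−a^{−1/2},−a^{−1/2})`, and segment `T₃K₃`. -/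
def contourL (a b Δ u₂ u₃ : ℝ) (T₂ T₃ : ℝ × ℝ) : Set (ℝ × ℝ) :=
  segment ℝ ((0, u₃) : ℝ × ℝ) ((u₂, 0) : ℝ × ℝ) ∪
    segment ℝ ((u₂, 0) : ℝ × ℝ) T₂ ∪ arcE a b Δ ∪
    segment ℝ T₃ ((0, u₃) : ℝ × ℝ)

/-- `φ` is the homogeneous functional associated with the contour `L`:
`φ(0) = 0` and, for `y ≠ 0`, `φ(y)` is positive with `y/φ(y) ∈ L`. -/
def IsPhi (L : Set (ℝ × ℝ)) (φ : ℝ × ℝ → ℝ) : Prop :=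
  φ 0 = 0 ∧ ∀ y : ℝ × ℝ, y ≠ 0 → 0 < φ y ∧ (φ y)⁻¹ • y ∈ L

/-- `n` is the outward unit normal field of the contour `L` (defined except at
`K₂` and `K₃`): on the elliptic arc it is `∇e(y)/‖∇e(y)‖`, and it is constant on
each of the three straight pieces, equal to `n(T₂)` on `(K₂,T₂]`, to `n(T₃)` on
`[T₃,K₃)`, and to the normalized `(u₂⁻¹, u₃⁻¹)` on `(K₃,K₂)`. -/
def IsN (a b Δ u₂ u₃ : ℝ) (T₂ T₃ : ℝ × ℝ) (n : ℝ × ℝ → ℝ × ℝ) : Prop :=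
  (∀ y ∈ arcE a b Δ, n y = (enorm2 (gradE a b y))⁻¹ • gradE a b y) ∧
  (∀ y ∈ segment ℝ ((u₂, 0) : ℝ × ℝ) T₂, y ≠ ((u₂, 0) : ℝ × ℝ) → n y = n T₂) ∧
  (∀ y ∈ segment ℝ T₃ ((0, u₃) : ℝ × ℝ), y ≠ ((0, u₃) : ℝ × ℝ) → n y = n T₃) ∧
  (∀ y ∈ segment ℝ ((0, u₃) : ℝ × ℝ) ((u₂, 0) : ℝ × ℝ),
    y ≠ ((0, u₃) : ℝ × ℝ) → y ≠ ((u₂, 0) : ℝ × ℝ) →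
    n y = (enorm2 ((u₂⁻¹, u₃⁻¹) : ℝ × ℝ))⁻¹ • ((u₂⁻¹, u₃⁻¹) : ℝ × ℝ))

namespace Stmt3Aux

def cross (u v : ℝ × ℝ) : ℝ := u.1 * v.2 - u.2 * v.1

def pp (a b Δ : ℝ) (y : ℝ × ℝ) : ℝ := (gradE a b y).1 + Δ * (gradE a b y).2
def qq (a b Δ : ℝ) (y : ℝ × ℝ) : ℝ := Δ * (gradE a b y).1 + (gradE a b y).2

def gfun (a b Δ u₂ u₃ : ℝ) (T₂ T₃ : ℝ × ℝ) (y : ℝ × ℝ) : ℝ :=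
  if pp a b Δ y ≤ 0 ∧ qq a b Δ y ≤ 0 then Real.sqrt (eF a b y)
  else if 0 ≤ y.1 ∧ 0 ≤ y.2 then y.1 / u₂ + y.2 / u₃
  else if 0 ≤ cross T₂ y then dotp (gradE a b T₂) y / 2
  else dotp (gradE a b T₃) y / 2

lemma pp_lin (a b Δ s t : ℝ) (u v : ℝ × ℝ) :
    pp a b Δ (s • u + t • v) = s * pp a b Δ u + t * pp a b Δ v := by
  simp [pp, gradE, Prod.smul_def, smul_eq_mul]; ring

lemma qq_lin (a b Δ s t : ℝ) (u v : ℝ × ℝ) :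
    qq a b Δ (s • u + t • v) = s * qq a b Δ u + t * qq a b Δ v := by
  simp [qq, gradE, Prod.smul_def, smul_eq_mul]; ring

lemma cross_lin (w : ℝ × ℝ) (s t : ℝ) (u v : ℝ × ℝ) :
    cross w (s • u + t • v) = s * cross w u + t * cross w v := by
  simp [cross, Prod.smul_def, smul_eq_mul]; ring

lemma dotp_lin (w : ℝ × ℝ) (s t : ℝ) (u v : ℝ × ℝ) :
    dotp w (s • u + t • v) = s * dotp w u + t * dotp w v := by
  simp [dotp, Prod.smul_def, smul_eq_mul]; ring

lemma dotp_sub (w u v : ℝ × ℝ) : dotp w (u - v) = dotp w u - dotp w v := by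
  simp [dotp]; ring

lemma pp_smul (a b Δ r : ℝ) (y : ℝ × ℝ) : pp a b Δ (r • y) = r * pp a b Δ y := by
  simp [pp, gradE, Prod.smul_def, smul_eq_mul]; ring

lemma qq_smul (a b Δ r : ℝ) (y : ℝ × ℝ) : qq a b Δ (r • y) = r * qq a b Δ y := by
  simp [qq, gradE, Prod.smul_def, smul_eq_mul]; ring

lemma cross_smul (w : ℝ × ℝ) (r : ℝ) (y : ℝ × ℝ) : cross w (r • y) = r * cross w y := by
  simp [cross, Prod.smul_def, smul_eq_mul]; ring

lemma dotp_smul (w : ℝ × ℝ) (r : ℝ) (y : ℝ × ℝ) : dotp w (r • y) = r * dotp w y := by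
  simp [dotp, Prod.smul_def, smul_eq_mul]; ring

lemma eF_smul (a b r : ℝ) (y : ℝ × ℝ) : eF a b (r • y) = r ^ 2 * eF a b y := by
  simp [eF, Prod.smul_def, smul_eq_mul]; ring

lemma euler (a b : ℝ) (y : ℝ × ℝ) : dotp (gradE a b y) y = 2 * eF a b y := by
  simp [dotp, gradE, eF]; ring

lemma cramer (u v y : ℝ × ℝ) (h : cross u v ≠ 0) :
    (cross y v / cross u v) • u + (cross u y / cross u v) • v = y := by
  unfold cross at *
  ext
  · show _ / _ * u.1 + _ / _ * v.1 = y.1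
    rw [div_mul_eq_mul_div, div_mul_eq_mul_div, ← add_div, div_eq_iff h]
    ring
  · show _ / _ * u.2 + _ / _ * v.2 = y.2
    rw [div_mul_eq_mul_div, div_mul_eq_mul_div, ← add_div, div_eq_iff h]
    ring

lemma eF_pos (a b : ℝ) (ha : 0 < a) (hb : 0 < b) (y : ℝ × ℝ) (hy : y ≠ 0) :
    0 < eF a b y := by
  by_cases h1 : y.1 = 0
  · have h2 : y.2 ≠ 0 := by
      intro h2
      exact hy (Prod.ext_iff.mpr ⟨by simpa using h1, by simpa using h2⟩)
    have h3 : y.1 - y.2 ≠ 0 := by rw [h1]; simpa using h2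
    have h4 := lt_of_le_of_ne (sq_nonneg (y.1 - y.2)) (Ne.symm (pow_ne_zero 2 h3))
    unfold eF; nlinarith [sq_nonneg y.1]
  · have h4 := lt_of_le_of_ne (sq_nonneg y.1) (Ne.symm (pow_ne_zero 2 h1))
    unfold eF; nlinarith [sq_nonneg (y.1 - y.2)]

lemma gfun_smul (a b Δ u₂ u₃ : ℝ) (T₂ T₃ : ℝ × ℝ) (r : ℝ) (hr : 0 < r) (y : ℝ × ℝ) :
    gfun a b Δ u₂ u₃ T₂ T₃ (r • y) = r * gfun a b Δ u₂ u₃ T₂ T₃ y := by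
  have l1 : ∀ x : ℝ, r * x ≤ 0 ↔ x ≤ 0 :=
    fun x => ⟨fun h => by nlinarith, fun h => by nlinarith⟩
  have l2 : ∀ x : ℝ, 0 ≤ r * x ↔ 0 ≤ x :=
    fun x => ⟨fun h => by nlinarith, fun h => by nlinarith⟩
  have hs1 : (r • y).1 = r * y.1 := rfl
  have hs2 : (r • y).2 = r * y.2 := rfl
  unfold gfun
  rw [pp_smul, qq_smul, cross_smul, dotp_smul, dotp_smul, eF_smul, hs1, hs2]
  simp only [l1, l2]
  split_ifs with h1 h2 h3
  · rw [Real.sqrt_mul (by positivity), Real.sqrt_sq hr.le]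
  · ring
  · ring
  · ring

set_option maxHeartbeats 1000000 in
lemma main (a b Δ u₂ u₃ : ℝ) (T₂ T₃ : ℝ × ℝ) (ha : 0 < a) (hb : 0 < b)
    (hΔ : 1 + (a + b) / b < Δ) (hcfg : GoodConfig a b Δ u₂ u₃ T₂ T₃) :
    (∀ y : ℝ × ℝ, y ∈ contourL a b Δ u₂ u₃ T₂ T₃ ↔ gfun a b Δ u₂ u₃ T₂ T₃ y = 1) ∧
    (∀ y : ℝ × ℝ, y ≠ 0 → 0 < gfun a b Δ u₂ u₃ T₂ T₃ y) := by
  have hΔ1 : 1 < Δ := by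
    have h0 : 0 < (a + b) / b := by positivity
    linarith
  have hΔsq : 1 - Δ ^ 2 < 0 := by nlinarith
  have hbΔ : a + b < b * Δ := by
    have h1 : b * (1 + (a + b) / b) < b * Δ := (mul_lt_mul_iff_right₀ hb).mpr hΔ
    have h2 : b * (1 + (a + b) / b) = b + (a + b) := by field_simp
    linarith
  obtain ⟨⟨he2, hT22, hex2⟩, ⟨he3, hT31, hT32, hex3⟩, hu2, hu3, hk2, hk3⟩ := hcfg
  obtain ⟨cn, hcn, hg2n⟩ := hex2
  obtain ⟨cn', hcn', hg3n⟩ := hex3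
  obtain ⟨c, hc, hg2⟩ : ∃ c : ℝ, 0 < c ∧ gradE a b T₂ = c • ((1, -Δ) : ℝ × ℝ) :=
    ⟨cn, by exact_mod_cast hcn, by rw [hg2n, ← Nat.cast_smul_eq_nsmul ℝ]⟩
  obtain ⟨c', hc', hg3⟩ : ∃ c : ℝ, 0 < c ∧ gradE a b T₃ = c • ((-Δ, 1) : ℝ × ℝ) :=
    ⟨cn', by exact_mod_cast hcn', by rw [hg3n, ← Nat.cast_smul_eq_nsmul ℝ]⟩
  clear hg2n hg3n hcn hcn'
  -- component equations
  have hg21 : 2 * a * T₂.1 + 2 * b * (T₂.1 - T₂.2) = c := by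
    have := congrArg Prod.fst hg2
    simpa [gradE, Prod.smul_def, smul_eq_mul] using this
  have hg22 : -(2 * b * (T₂.1 - T₂.2)) = c * -Δ := by
    have := congrArg Prod.snd hg2
    simpa [gradE, Prod.smul_def, smul_eq_mul] using this
  have hd2 : 2 * b * (T₂.1 - T₂.2) = c * Δ := by linear_combination -hg22
  have hx2 : 2 * a * T₂.1 = c * (1 - Δ) := by linear_combination hg21 - hd2
  have hg31 : 2 * a * T₃.1 + 2 * b * (T₃.1 - T₃.2) = c' * -Δ := by
    have := congrArg Prod.fst hg3
    simpa [gradE, Prod.smul_def, smul_eq_mul] using this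
  have hg32 : -(2 * b * (T₃.1 - T₃.2)) = c' := by
    have := congrArg Prod.snd hg3
    simpa [gradE, Prod.smul_def, smul_eq_mul] using this
  have hd3 : 2 * b * (T₃.1 - T₃.2) = -c' := by linear_combination -hg32
  have hx3 : 2 * a * T₃.1 = c' * (1 - Δ) := by linear_combination hg31 - hd3
  have hT21 : T₂.1 < 0 := by
    have h1 : c * (1 - Δ) < 0 := mul_neg_of_pos_of_neg hc (by linarith)
    by_contra hcon
    push_neg at hcon
    have h2 : 0 ≤ 2 * a * T₂.1 := mul_nonneg (by linarith) hcon
    linarith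
  -- tangent line intercepts
  have heu2 : dotp (gradE a b T₂) T₂ = 2 := by rw [euler, he2]; ring
  have heu3 : dotp (gradE a b T₃) T₃ = 2 := by rw [euler, he3]; ring
  have ell2K2 : dotp (gradE a b T₂) ((u₂, 0) : ℝ × ℝ) = 2 := by
    have h := hk2
    rw [dotp_sub] at h
    linarith
  have ell3K3 : dotp (gradE a b T₃) ((0, u₃) : ℝ × ℝ) = 2 := by
    have h := hk3
    rw [dotp_sub] at h
    linarith
  -- pp, qq values
  have ppT2 : pp a b Δ T₂ = c * (1 - Δ ^ 2) := by
    simp only [pp]; rw [hg2]; simp [Prod.smul_def, smul_eq_mul]; ring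
  have ppT2neg : pp a b Δ T₂ < 0 := by
    rw [ppT2]; exact mul_neg_of_pos_of_neg hc hΔsq
  have qqT2 : qq a b Δ T₂ = 0 := by
    simp only [qq]; rw [hg2]; simp [Prod.smul_def, smul_eq_mul]; ring
  have ppT3 : pp a b Δ T₃ = 0 := by
    simp only [pp]; rw [hg3]; simp [Prod.smul_def, smul_eq_mul]; ring
  have qqT3 : qq a b Δ T₃ = c' * (1 - Δ ^ 2) := by
    simp only [qq]; rw [hg3]; simp [Prod.smul_def, smul_eq_mul]; ring
  have qqT3neg : qq a b Δ T₃ < 0 := by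
    rw [qqT3]; exact mul_neg_of_pos_of_neg hc' hΔsq
  have ppK2 : pp a b Δ ((u₂, 0) : ℝ × ℝ) = 2 * u₂ * ((a + b) - b * Δ) := by
    simp [pp, gradE]; ring
  have ppK2neg : pp a b Δ ((u₂, 0) : ℝ × ℝ) < 0 := by
    rw [ppK2]
    exact mul_neg_of_pos_of_neg (by linarith) (by linarith)
  have qqK2 : qq a b Δ ((u₂, 0) : ℝ × ℝ) = 2 * u₂ * (Δ * (a + b) - b) := by
    simp [qq, gradE]; ring
  have qqK2pos : 0 < qq a b Δ ((u₂, 0) : ℝ × ℝ) := by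
    rw [qqK2]
    have h1 : 0 < (Δ - 1) * (a + b) := mul_pos (by linarith) (by linarith)
    have h2 : (Δ - 1) * (a + b) = Δ * (a + b) - (a + b) := by ring
    exact mul_pos (by linarith) (by linarith)
  have ppK3 : pp a b Δ ((0, u₃) : ℝ × ℝ) = 2 * b * u₃ * (Δ - 1) := by
    simp [pp, gradE]; ring
  have ppK3pos : 0 < pp a b Δ ((0, u₃) : ℝ × ℝ) := by
    rw [ppK3]
    exact mul_pos (mul_pos (mul_pos two_pos hb) hu3) (by linarith)
  have qqK3 : qq a b Δ ((0, u₃) : ℝ × ℝ) = -pp a b Δ ((0, u₃) : ℝ × ℝ) := by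
    rw [ppK3]; simp [qq, gradE]; ring
  have qqK3neg : qq a b Δ ((0, u₃) : ℝ × ℝ) < 0 := by
    rw [qqK3]; linarith
  have hcu2 : c * u₂ = 2 := by
    have h := ell2K2
    rw [hg2] at h
    simpa [dotp, Prod.smul_def, smul_eq_mul] using h
  have hcu3 : c' * u₃ = 2 := by
    have h := ell3K3
    rw [hg3] at h
    simpa [dotp, Prod.smul_def, smul_eq_mul] using h
  -- cross values
  have hcross23 : 4 * a * b * cross T₂ T₃ = c * c' * (1 - Δ) * (1 + Δ) := by
    simp only [cross]
    linear_combination (-(2 * a * T₂.1)) * hd3 + (2 * a * T₃.1) * hd2 + c' * hx2 + c * Δ * hx3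
  have hc23neg : cross T₂ T₃ < 0 := by
    have h1 : c * c' * (1 - Δ) * (1 + Δ) < 0 :=
      mul_neg_of_neg_of_pos
        (mul_neg_of_pos_of_neg (mul_pos hc hc') (by linarith)) (by linarith)
    by_contra hcon
    push_neg at hcon
    have h2 : 0 ≤ 4 * a * b * cross T₂ T₃ :=
      mul_nonneg (by positivity) hcon
    linarith
  have hcK2T2 : cross ((u₂, 0) : ℝ × ℝ) T₂ < 0 := by
    have h : cross ((u₂, 0) : ℝ × ℝ) T₂ = u₂ * T₂.2 := by simp [cross]
    rw [h]; exact mul_neg_of_pos_of_neg hu2 hT22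
  have hcT2K2 : 0 < cross T₂ ((u₂, 0) : ℝ × ℝ) := by
    have h : cross T₂ ((u₂, 0) : ℝ × ℝ) = -(T₂.2 * u₂) := by simp [cross]
    rw [h]
    have := mul_neg_of_neg_of_pos hT22 hu2
    linarith
  have hcT2K3 : cross T₂ ((0, u₃) : ℝ × ℝ) < 0 := by
    have h : cross T₂ ((0, u₃) : ℝ × ℝ) = T₂.1 * u₃ := by simp [cross]
    rw [h]; exact mul_neg_of_neg_of_pos hT21 hu3
  have hcT3K3 : cross T₃ ((0, u₃) : ℝ × ℝ) < 0 := by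
    have h : cross T₃ ((0, u₃) : ℝ × ℝ) = T₃.1 * u₃ := by simp [cross]
    rw [h]; exact mul_neg_of_neg_of_pos hT31 hu3
  -- representation lemmas
  have rep2 : ∀ y : ℝ × ℝ, ¬(0 ≤ y.1 ∧ 0 ≤ y.2) → 0 ≤ cross T₂ y →
      ∃ s t : ℝ, 0 ≤ s ∧ 0 ≤ t ∧ s • ((u₂, 0) : ℝ × ℝ) + t • T₂ = y ∧
        dotp (gradE a b T₂) y / 2 = s + t := by
    intro y hq hcy
    have hy2 : y.2 ≤ 0 := by
      by_contra hy2
      push_neg at hy2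
      have hy1 : y.1 < 0 := by
        by_contra hy1; push_neg at hy1; exact hq ⟨hy1, hy2.le⟩
      have hlt : cross T₂ y < 0 := by
        have h : cross T₂ y = T₂.1 * y.2 - T₂.2 * y.1 := rfl
        rw [h]
        have h1 := mul_neg_of_neg_of_pos hT21 hy2
        have h2 := mul_pos_of_neg_of_neg hT22 hy1
        linarith
      linarith
    have hD : cross ((u₂, 0) : ℝ × ℝ) T₂ ≠ 0 := ne_of_lt hcK2T2
    refine ⟨cross y T₂ / cross ((u₂, 0) : ℝ × ℝ) T₂,
      cross ((u₂, 0) : ℝ × ℝ) y / cross ((u₂, 0) : ℝ × ℝ) T₂, ?_, ?_, cramer _ _ _ hD, ?_⟩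
    · apply div_nonneg_iff.mpr
      refine Or.inr ⟨?_, hcK2T2.le⟩
      have h : cross y T₂ = -cross T₂ y := by simp [cross]; ring
      rw [h]; linarith
    · apply div_nonneg_iff.mpr
      refine Or.inr ⟨?_, hcK2T2.le⟩
      have h : cross ((u₂, 0) : ℝ × ℝ) y = u₂ * y.2 := by simp [cross]
      rw [h]
      exact mul_nonpos_iff.mpr (Or.inl ⟨hu2.le, hy2⟩)
    · conv_lhs => rw [← cramer ((u₂, 0) : ℝ × ℝ) T₂ y hD]
      rw [dotp_lin, ell2K2, heu2]; ring
  have rep3 : ∀ y : ℝ × ℝ, ¬(pp a b Δ y ≤ 0 ∧ qq a b Δ y ≤ 0) → ¬(0 ≤ y.1 ∧ 0 ≤ y.2) →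
      cross T₂ y < 0 →
      ∃ s t : ℝ, 0 ≤ s ∧ 0 ≤ t ∧ s • T₃ + t • ((0, u₃) : ℝ × ℝ) = y ∧
        dotp (gradE a b T₃) y / 2 = s + t := by
    intro y hnc hq hcy
    have hy1 : y.1 ≤ 0 := by
      by_contra h
      push_neg at h
      have hy2 : y.2 < 0 := by
        by_contra h2; push_neg at h2; exact hq ⟨h.le, h2⟩
      have hgt : 0 < cross T₂ y := by
        have hh : cross T₂ y = T₂.1 * y.2 - T₂.2 * y.1 := rfl
        rw [hh]
        have h1 := mul_pos_of_neg_of_neg hT21 hy2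
        have h2 := mul_neg_of_neg_of_pos hT22 h
        linarith
      linarith
    have hT3y : cross T₃ y ≤ 0 := by
      by_contra h
      push_neg at h
      have hD : cross T₂ T₃ ≠ 0 := ne_of_lt hc23neg
      have hrep := cramer T₂ T₃ y hD
      have hαpos : 0 ≤ cross y T₃ / cross T₂ T₃ := by
        apply div_nonneg_iff.mpr
        refine Or.inr ⟨?_, hc23neg.le⟩
        have hh : cross y T₃ = -cross T₃ y := by simp [cross]; ring
        rw [hh]; linarith
      have hβpos : 0 ≤ cross T₂ y / cross T₂ T₃ :=
        div_nonneg_iff.mpr (Or.inr ⟨hcy.le, hc23neg.le⟩)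
      apply hnc
      constructor
      · rw [← hrep, pp_lin, ppT3]
        have h1 : cross y T₃ / cross T₂ T₃ * pp a b Δ T₂ ≤ 0 :=
          mul_nonpos_iff.mpr (Or.inl ⟨hαpos, ppT2neg.le⟩)
        linarith
      · rw [← hrep, qq_lin, qqT2]
        have h1 : cross T₂ y / cross T₂ T₃ * qq a b Δ T₃ ≤ 0 :=
          mul_nonpos_iff.mpr (Or.inl ⟨hβpos, qqT3neg.le⟩)
        linarith
    have hD : cross T₃ ((0, u₃) : ℝ × ℝ) ≠ 0 := ne_of_lt hcT3K3
    refine ⟨cross y ((0, u₃) : ℝ × ℝ) / cross T₃ ((0, u₃) : ℝ × ℝ),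
      cross T₃ y / cross T₃ ((0, u₃) : ℝ × ℝ), ?_, ?_, cramer _ _ _ hD, ?_⟩
    · apply div_nonneg_iff.mpr
      refine Or.inr ⟨?_, hcT3K3.le⟩
      have hh : cross y ((0, u₃) : ℝ × ℝ) = y.1 * u₃ := by simp [cross]
      rw [hh]
      exact mul_nonpos_iff.mpr (Or.inr ⟨hy1, hu3.le⟩)
    · exact div_nonneg_iff.mpr (Or.inr ⟨hT3y, hcT3K3.le⟩)
    · conv_lhs => rw [← cramer T₃ ((0, u₃) : ℝ × ℝ) y hD]
      rw [dotp_lin, heu3, ell3K3]; ring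
  constructor
  · -- the contour is exactly {g = 1}
    intro y
    constructor
    · -- forward: L ⊆ {g = 1}
      intro hy
      simp only [contourL, Set.mem_union] at hy
      rcases hy with ((hy | hy) | hy) | hy
      · -- segment K₃ K₂
        obtain ⟨s, t, hs, ht, hst, rfl⟩ := hy
        have h1 : (s • ((0, u₃) : ℝ × ℝ) + t • ((u₂, 0) : ℝ × ℝ)).1 = t * u₂ := by
          simp [Prod.smul_def, smul_eq_mul]
        have h2 : (s • ((0, u₃) : ℝ × ℝ) + t • ((u₂, 0) : ℝ × ℝ)).2 = s * u₃ := by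
          simp [Prod.smul_def, smul_eq_mul]
        have hnc : ¬(pp a b Δ (s • ((0, u₃) : ℝ × ℝ) + t • ((u₂, 0) : ℝ × ℝ)) ≤ 0 ∧
            qq a b Δ (s • ((0, u₃) : ℝ × ℝ) + t • ((u₂, 0) : ℝ × ℝ)) ≤ 0) := by
          rintro ⟨hp, hq⟩
          rw [pp_lin] at hp
          rw [qq_lin, qqK3] at hq
          -- hp : s * P3 + t * P2 ≤ 0 ; hq : s * (-P3) + t * Q2 ≤ 0
          have e1 : s * pp a b Δ ((0, u₃) : ℝ × ℝ) ≤ -(t * pp a b Δ ((u₂, 0) : ℝ × ℝ)) := by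
            linarith
          have e2 : t * qq a b Δ ((u₂, 0) : ℝ × ℝ) ≤ s * pp a b Δ ((0, u₃) : ℝ × ℝ) := by
            have hh : s * -pp a b Δ ((0, u₃) : ℝ × ℝ) = -(s * pp a b Δ ((0, u₃) : ℝ × ℝ)) := by
              ring
            linarith [hq, hh]
          have ht0 : t ≤ 0 := by
            by_contra hcon
            push_neg at hcon
            have hdiff : -pp a b Δ ((u₂, 0) : ℝ × ℝ) < qq a b Δ ((u₂, 0) : ℝ × ℝ) := by
              rw [ppK2, qqK2]
              have hpos : 0 < 2 * u₂ * a * (Δ + 1) :=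
                mul_pos (mul_pos (mul_pos two_pos hu2) ha) (by linarith)
              have hring : 2 * u₂ * (Δ * (a + b) - b) - -(2 * u₂ * ((a + b) - b * Δ)) =
                  2 * u₂ * a * (Δ + 1) := by ring
              linarith
            have hmul := (mul_lt_mul_iff_right₀ hcon).mpr hdiff
            have hh : t * -pp a b Δ ((u₂, 0) : ℝ × ℝ) = -(t * pp a b Δ ((u₂, 0) : ℝ × ℝ)) := by
              ring
            linarith
          have ht0' : t = 0 := le_antisymm ht0 ht
          have hs1 : s = 1 := by linarith
          rw [ht0', hs1] at hp
          have hh : (1 : ℝ) * pp a b Δ ((0, u₃) : ℝ × ℝ) +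
              0 * pp a b Δ ((u₂, 0) : ℝ × ℝ) = pp a b Δ ((0, u₃) : ℝ × ℝ) := by ring
          linarith
        unfold gfun
        rw [if_neg hnc, if_pos ⟨by rw [h1]; positivity, by rw [h2]; positivity⟩, h1, h2]
        field_simp
        linarith
      · -- segment K₂ T₂
        obtain ⟨s, t, hs, ht, hst, rfl⟩ := hy
        by_cases hs0 : s = 0
        · have hy' : s • ((u₂, 0) : ℝ × ℝ) + t • T₂ = T₂ := by
            rw [hs0, (by linarith : t = 1)]; simp
          rw [hy']
          unfold gfun
          rw [if_pos ⟨ppT2neg.le, le_of_eq qqT2⟩, he2, Real.sqrt_one]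
        · have hs' : 0 < s := lt_of_le_of_ne hs (Ne.symm hs0)
          have hnc : ¬(pp a b Δ (s • ((u₂, 0) : ℝ × ℝ) + t • T₂) ≤ 0 ∧
              qq a b Δ (s • ((u₂, 0) : ℝ × ℝ) + t • T₂) ≤ 0) := by
            rintro ⟨_, hq⟩
            rw [qq_lin, qqT2] at hq
            have h1 := mul_pos hs' qqK2pos
            have hh : t * (0:ℝ) = 0 := by ring
            linarith
          unfold gfun
          rw [if_neg hnc]
          by_cases ht0 : t = 0
          · have hy1 : (s • ((u₂, 0) : ℝ × ℝ) + t • T₂).1 = u₂ := by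
              rw [ht0, (by linarith : s = 1)]; simp
            have hy2 : (s • ((u₂, 0) : ℝ × ℝ) + t • T₂).2 = 0 := by
              rw [ht0, (by linarith : s = 1)]; simp
            rw [if_pos ⟨by rw [hy1]; positivity, le_of_eq hy2.symm⟩, hy1, hy2]
            field_simp
            ring
          · have ht' : 0 < t := lt_of_le_of_ne ht (Ne.symm ht0)
            have hy2 : (s • ((u₂, 0) : ℝ × ℝ) + t • T₂).2 = t * T₂.2 := by
              simp [Prod.smul_def, smul_eq_mul]
            have hnq : ¬(0 ≤ (s • ((u₂, 0) : ℝ × ℝ) + t • T₂).1 ∧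
                0 ≤ (s • ((u₂, 0) : ℝ × ℝ) + t • T₂).2) := by
              rintro ⟨_, h2⟩
              rw [hy2] at h2
              have := mul_neg_of_pos_of_neg ht' hT22
              linarith
            rw [if_neg hnq, if_pos (by
              rw [cross_lin]
              have hz : cross T₂ T₂ = 0 := by simp [cross]; ring
              rw [hz]
              have h1 := mul_nonneg hs hcT2K2.le
              have hh : t * (0:ℝ) = 0 := by ring
              linarith)]
            rw [dotp_lin, ell2K2, heu2]
            linarith
      · -- the arc
        obtain ⟨hey, c₂, c₃, hc₂, hc₃, hgy⟩ := hy
        have hp : pp a b Δ y = c₂ * (1 - Δ ^ 2) := by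
          simp only [pp]; rw [hgy]; simp [Prod.smul_def, smul_eq_mul]; ring
        have hq : qq a b Δ y = c₃ * (1 - Δ ^ 2) := by
          simp only [qq]; rw [hgy]; simp [Prod.smul_def, smul_eq_mul]; ring
        unfold gfun
        rw [if_pos ⟨by rw [hp]; exact mul_nonpos_iff.mpr (Or.inl ⟨hc₂, hΔsq.le⟩),
          by rw [hq]; exact mul_nonpos_iff.mpr (Or.inl ⟨hc₃, hΔsq.le⟩)⟩, hey, Real.sqrt_one]
      · -- segment T₃ K₃
        obtain ⟨s, t, hs, ht, hst, rfl⟩ := hy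
        by_cases ht0 : t = 0
        · have hy' : s • T₃ + t • ((0, u₃) : ℝ × ℝ) = T₃ := by
            rw [ht0, (by linarith : s = 1)]; simp
          rw [hy']
          unfold gfun
          rw [if_pos ⟨le_of_eq ppT3, qqT3neg.le⟩, he3, Real.sqrt_one]
        · have ht' : 0 < t := lt_of_le_of_ne ht (Ne.symm ht0)
          have hnc : ¬(pp a b Δ (s • T₃ + t • ((0, u₃) : ℝ × ℝ)) ≤ 0 ∧
              qq a b Δ (s • T₃ + t • ((0, u₃) : ℝ × ℝ)) ≤ 0) := by
            rintro ⟨hp, _⟩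
            rw [pp_lin, ppT3] at hp
            have h1 := mul_pos ht' ppK3pos
            have hh : s * (0:ℝ) = 0 := by ring
            linarith
          unfold gfun
          rw [if_neg hnc]
          by_cases hs0 : s = 0
          · have hy1 : (s • T₃ + t • ((0, u₃) : ℝ × ℝ)).1 = 0 := by
              rw [hs0, (by linarith : t = 1)]; simp
            have hy2 : (s • T₃ + t • ((0, u₃) : ℝ × ℝ)).2 = u₃ := by
              rw [hs0, (by linarith : t = 1)]; simp
            rw [if_pos ⟨le_of_eq hy1.symm, by rw [hy2]; positivity⟩, hy1, hy2]
            field_simp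
            ring
          · have hs' : 0 < s := lt_of_le_of_ne hs (Ne.symm hs0)
            have hy1 : (s • T₃ + t • ((0, u₃) : ℝ × ℝ)).1 = s * T₃.1 := by
              simp [Prod.smul_def, smul_eq_mul]
            have hnq : ¬(0 ≤ (s • T₃ + t • ((0, u₃) : ℝ × ℝ)).1 ∧
                0 ≤ (s • T₃ + t • ((0, u₃) : ℝ × ℝ)).2) := by
              rintro ⟨h1, _⟩
              rw [hy1] at h1
              have := mul_neg_of_pos_of_neg hs' hT31
              linarith
            have hcneg : ¬(0 ≤ cross T₂ (s • T₃ + t • ((0, u₃) : ℝ × ℝ))) := by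
              rw [cross_lin]
              push_neg
              have h1 := mul_neg_of_pos_of_neg hs' hc23neg
              have h2 := mul_neg_of_pos_of_neg ht' hcT2K3
              linarith
            rw [if_neg hnq, if_neg hcneg]
            rw [dotp_lin, heu3, ell3K3]
            linarith
    · -- backward: {g = 1} ⊆ L
      intro hgy
      unfold gfun at hgy
      simp only [contourL, Set.mem_union]
      split_ifs at hgy with h1 h2 h3
      · -- on the arc
        have hey : eF a b y = 1 := by
          have h0 : 0 ≤ eF a b y := by unfold eF; positivity
          have := Real.sq_sqrt h0
          rw [hgy] at this
          linarith [this]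
        refine Or.inl (Or.inr ⟨hey, pp a b Δ y / (1 - Δ ^ 2), qq a b Δ y / (1 - Δ ^ 2),
          ?_, ?_, ?_⟩)
        · exact div_nonneg_iff.mpr (Or.inr ⟨h1.1, hΔsq.le⟩)
        · exact div_nonneg_iff.mpr (Or.inr ⟨h1.2, hΔsq.le⟩)
        · have hD : (1 : ℝ) - Δ ^ 2 ≠ 0 := ne_of_lt hΔsq
          ext
          · show (gradE a b y).1 = _
            simp only [pp, qq, Prod.fst_add, Prod.smul_def, smul_eq_mul]
            field_simp
            ring
          · show (gradE a b y).2 = _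
            simp only [pp, qq, Prod.snd_add, Prod.smul_def, smul_eq_mul]
            field_simp
            ring
      · -- on segment K₃ K₂
        refine Or.inl (Or.inl (Or.inl ⟨y.2 / u₃, y.1 / u₂,
          div_nonneg h2.2 hu3.le, div_nonneg h2.1 hu2.le, by linarith, ?_⟩))
        ext
        · show y.2 / u₃ * 0 + y.1 / u₂ * u₂ = y.1
          field_simp
          ring
        · show y.2 / u₃ * u₃ + y.1 / u₂ * 0 = y.2
          field_simp
          ring
      · -- on segment K₂ T₂
        obtain ⟨s, t, hs, ht, hrep, hval⟩ := rep2 y h2 h3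
        exact Or.inl (Or.inl (Or.inr ⟨s, t, hs, ht, by linarith [hval, hgy], hrep⟩))
      · -- on segment T₃ K₃
        push_neg at h3
        obtain ⟨s, t, hs, ht, hrep, hval⟩ := rep3 y h1 h2 h3
        exact Or.inr ⟨s, t, hs, ht, by linarith [hval, hgy], hrep⟩
  · -- positivity
    intro y hy
    unfold gfun
    split_ifs with h1 h2 h3
    · exact Real.sqrt_pos.mpr (eF_pos a b ha hb y hy)
    · have hne : 0 < y.1 ∨ 0 < y.2 := by
        by_contra h
        push_neg at h
        have hy1 : y.1 = 0 := le_antisymm h.1 h2.1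
        have hy2 : y.2 = 0 := le_antisymm h.2 h2.2
        exact hy (Prod.ext_iff.mpr ⟨by simpa using hy1, by simpa using hy2⟩)
      rcases hne with h | h
      · have g1 : 0 < y.1 / u₂ := div_pos h hu2
        have g2 : 0 ≤ y.2 / u₃ := div_nonneg h2.2 hu3.le
        linarith
      · have g1 : 0 ≤ y.1 / u₂ := div_nonneg h2.1 hu2.le
        have g2 : 0 < y.2 / u₃ := div_pos h hu3
        linarith
    · obtain ⟨s, t, hs, ht, hrep, hval⟩ := rep2 y h2 h3
      rw [hval]
      rcases lt_or_eq_of_le (by linarith : (0:ℝ) ≤ s + t) with h | h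
      · exact h
      · exfalso
        have hs0 : s = 0 := by linarith
        have ht0 : t = 0 := by linarith
        rw [hs0, ht0] at hrep
        simp at hrep
        exact hy hrep.symm
    · push_neg at h3
      obtain ⟨s, t, hs, ht, hrep, hval⟩ := rep3 y h1 h2 h3
      rw [hval]
      rcases lt_or_eq_of_le (by linarith : (0:ℝ) ≤ s + t) with h | h
      · exact h
      · exfalso
        have hs0 : s = 0 := by linarith
        have ht0 : t = 0 := by linarith
        rw [hs0, ht0] at hrep
        simp at hrep
        exact hy hrep.symm

end Stmt3Aux

open Stmt3Aux in
/-- for all sufficiently large `Δ`, the function `φ` is well defined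
(for every `y ≠ 0` there is a unique `r > 0` with `y/r ∈ L`), and any function `φ`
with `φ(0) = 0`, `φ(y) > 0` and `y/φ(y) ∈ L` for `y ≠ 0` satisfies: `φ ≥ 0`,
`φ(y) > 0` for `y ≠ 0`, `φ(r·y) = r·φ(y)` for `r > 0`, and `{φ = 1} = L`. -/
theorem stmt3 (a b : ℝ) (ha : 0 < a) (hb : 0 < b) :
    ∃ Δ₀ > (0 : ℝ), ∀ Δ > Δ₀, ∀ u₂ u₃ : ℝ, ∀ T₂ T₃ : ℝ × ℝ,
      GoodConfig a b Δ u₂ u₃ T₂ T₃ →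
      (∀ y : ℝ × ℝ, y ≠ 0 → ∃! r : ℝ, 0 < r ∧ r⁻¹ • y ∈ contourL a b Δ u₂ u₃ T₂ T₃) ∧
      (∀ φ : ℝ × ℝ → ℝ, IsPhi (contourL a b Δ u₂ u₃ T₂ T₃) φ →
        (∀ y : ℝ × ℝ, 0 ≤ φ y) ∧ (∀ y : ℝ × ℝ, y ≠ 0 → 0 < φ y) ∧
        (∀ r : ℝ, 0 < r → ∀ y : ℝ × ℝ, φ (r • y) = r * φ y) ∧
        {y : ℝ × ℝ | φ y = 1} = contourL a b Δ u₂ u₃ T₂ T₃) := by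
  refine ⟨1 + (a + b) / b, by positivity, ?_⟩
  intro Δ hΔ u₂ u₃ T₂ T₃ hcfg
  obtain ⟨hiff, hpos⟩ := Stmt3Aux.main a b Δ u₂ u₃ T₂ T₃ ha hb hΔ hcfg
  have hg0 : gfun a b Δ u₂ u₃ T₂ T₃ 0 = 0 := by
    unfold gfun
    rw [if_pos ⟨by simp [pp, gradE], by simp [qq, gradE]⟩]
    simp [eF]
  have hexu : ∀ y : ℝ × ℝ, y ≠ 0 →
      ∃! r : ℝ, 0 < r ∧ r⁻¹ • y ∈ contourL a b Δ u₂ u₃ T₂ T₃ := by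
    intro y hy
    have hgy := hpos y hy
    refine ⟨gfun a b Δ u₂ u₃ T₂ T₃ y, ⟨hgy, ?_⟩, ?_⟩
    · rw [hiff, gfun_smul a b Δ u₂ u₃ T₂ T₃ _ (inv_pos.mpr hgy), inv_mul_cancel₀ (ne_of_gt hgy)]
    · rintro r ⟨hr, hmem⟩
      rw [hiff, gfun_smul a b Δ u₂ u₃ T₂ T₃ _ (inv_pos.mpr hr)] at hmem
      field_simp at hmem
      linarith
  have h0L : (0 : ℝ × ℝ) ∉ contourL a b Δ u₂ u₃ T₂ T₃ := by
    rw [hiff, hg0]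
    norm_num
  refine ⟨hexu, ?_⟩
  rintro φ ⟨hφ0, hφ⟩
  have hhom : ∀ r : ℝ, 0 < r → ∀ y : ℝ × ℝ, φ (r • y) = r * φ y := by
    intro r hr y
    by_cases hy : y = 0
    · rw [hy, smul_zero, hφ0, mul_zero]
    · have hry : r • y ≠ 0 := smul_ne_zero (ne_of_gt hr) hy
      obtain ⟨ρ, _, hun⟩ := hexu (r • y) hry
      have e1 := hun (φ (r • y)) ⟨(hφ _ hry).1, (hφ _ hry).2⟩
      have e2 : r * φ y = ρ := by
        apply hun
        refine ⟨mul_pos hr (hφ y hy).1, ?_⟩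
        have hs : (r * φ y)⁻¹ • (r • y) = (φ y)⁻¹ • y := by
          rw [smul_smul]
          congr 1
          have h1 : φ y ≠ 0 := ne_of_gt (hφ y hy).1
          have h2 : r ≠ 0 := ne_of_gt hr
          field_simp
        rw [hs]
        exact (hφ y hy).2
      rw [e1, ← e2]
  refine ⟨?_, fun y hy => (hφ y hy).1, hhom, ?_⟩
  · intro y
    by_cases hy : y = 0
    · rw [hy, hφ0]
    · exact (hφ y hy).1.le
  · ext y
    simp only [Set.mem_setOf_eq]
    constructor
    · intro h1
      have hy : y ≠ 0 := by
        rintro rfl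
        rw [hφ0] at h1
        norm_num at h1
      have := (hφ y hy).2
      rw [h1] at this
      simpa using this
    · intro hyL
      have hy : y ≠ 0 := by rintro rfl; exact h0L hyL
      obtain ⟨ρ, _, hun⟩ := hexu y hy
      have e1 := hun 1 ⟨one_pos, by simpa using hyL⟩
      have e2 := hun (φ y) ⟨(hφ y hy).1, (hφ y hy).2⟩
      rw [e2, e1]
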